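/- The harmonic mean density is the stationary point of the weighted average Pearson χ² divergence: if p_h(x) satisfies p_h(x) · Σᵢ ωᵢ/pᵢ(x) = 1 for all x (with Σωᵢ = 1), then p_h minimizes J(q) = Σᵢ ωᵢ · (1/2)∫ (q(x) − pᵢ(x))²/pᵢ(x) dx over all nonnegative functions q. In particular, for any nonnegative measurable q, J(q) ≥ J(p_h). -/
import Mathlib


open MeasureTheory Finset

theorem hmd_minimizes_average_pearson_chi_sq
    (n N : ℕ) (p : Fin N → (Fin n → ℝ) → ℝ)
    (hp : ∀ i, Measurable (p i)) (hppos : ∀ i x, 0 < p i x)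
    (hpdf : ∀ i, ∫ x, p i x = 1)
    (ω : Fin N → ℝ) (hω : ∀ i, 0 < ω i) (hωsum : ∑ i, ω i = 1)
    (ph : (Fin n → ℝ) → ℝ)
    (hph : ∀ x, ph x * ∑ i, ω i / p i x = 1)
    (hIph : ∀ i, Integrable (fun x => (ph x - p i x) ^ 2 / p i x)) :
    ∀ q : (Fin n → ℝ) → ℝ, Measurable q → (∀ x, 0 ≤ q x) →
      (∀ i, Integrable (fun x => (q x - p i x) ^ 2 / p i x)) →
      (∑ i, ω i * ((1 / 2) * ∫ x, (ph x - p i x) ^ 2 / p i x))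
        ≤ ∑ i, ω i * ((1 / 2) * ∫ x, (q x - p i x) ^ 2 / p i x) := by
  intro q hqm hqnn hIq
  -- expansion lemma
  have expand : ∀ (t : ℝ) (x : Fin n → ℝ),
      ∑ i, ω i * ((t - p i x) ^ 2 / p i x)
        = t ^ 2 * (∑ i, ω i / p i x) - 2 * t + ∑ i, ω i * p i x := by
    intro t x
    have h1 : ∀ i : Fin N, ω i * ((t - p i x) ^ 2 / p i x)
        = t ^ 2 * (ω i / p i x) - 2 * t * ω i + ω i * p i x := by
      intro i
      have hpi := (hppos i x).ne'
      field_simp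
      ring
    rw [Finset.sum_congr rfl fun i _ => h1 i]
    rw [Finset.sum_add_distrib, Finset.sum_sub_distrib, ← Finset.mul_sum,
      ← Finset.mul_sum, hωsum]
    ring
  -- pointwise inequality
  have key : ∀ x, ∑ i, ω i * ((ph x - p i x) ^ 2 / p i x)
      ≤ ∑ i, ω i * ((q x - p i x) ^ 2 / p i x) := by
    intro x
    rw [expand, expand]
    set S := ∑ i, ω i / p i x with hSdef
    have hph' := hph x
    have hSnn : 0 ≤ S := Finset.sum_nonneg fun i _ =>
      div_nonneg (hω i).le (hppos i x).le
    have hSpos : 0 < S := by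
      rcases hSnn.lt_or_eq with h | h
      · exact h
      · exfalso; rw [← hSdef, ← h, mul_zero] at hph'; norm_num at hph'
    nlinarith [sq_nonneg (S * q x - 1), sq_nonneg (q x - ph x), hSpos,
      mul_pos hSpos hSpos]
  -- integral rearrangement
  have rearrange : ∀ (f : (Fin n → ℝ) → ℝ)
      (hf : ∀ i, Integrable (fun x => (f x - p i x) ^ 2 / p i x)),
      ∑ i, ω i * ((1 / 2) * ∫ x, (f x - p i x) ^ 2 / p i x)
        = (1 / 2) * ∫ x, ∑ i, ω i * ((f x - p i x) ^ 2 / p i x) := by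
    intro f hf
    rw [integral_finset_sum _ fun i _ => (hf i).const_mul (ω i),
      Finset.mul_sum]
    refine Finset.sum_congr rfl fun i _ => ?_
    rw [MeasureTheory.integral_const_mul]
    ring
  rw [rearrange ph hIph, rearrange q hIq]
  have hle : (∫ x, ∑ i, ω i * ((ph x - p i x) ^ 2 / p i x))
      ≤ ∫ x, ∑ i, ω i * ((q x - p i x) ^ 2 / p i x) := by
    refine integral_mono ?_ ?_ key
    · exact integrable_finset_sum _ fun i _ => (hIph i).const_mul (ω i)
    · exact integrable_finset_sum _ fun i _ => (hIq i).const_mul (ω i)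
  linarith
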